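/- Let A be a finite-dimensional algebra over a field K whose module category mod A has no short cycles, and let P be an indecomposable projective-injective A-module which is not simple. Then there is no nonzero homomorphism from P to itself whose image is the socle of P; equivalently soc(P) is not a quotient of top(P), so soc(P) ≇ top(P). -/

import Mathlib

/-- A nonzero module with no nontrivial direct sum decomposition. -/
def IsIndecomposableModule (A : Type) [Ring A] (M : Type) [AddCommGroup M]
    [Module A M] : Prop :=
  (⊤ : Submodule A M) ≠ ⊥ ∧ ∀ N P : Submodule A M, IsCompl N P → N = ⊥ ∨ P = ⊥

/-- `mod A` has no short cycles: there is no pair of nonzero nonisomorphisms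
`X → Y → X` between finite-dimensional indecomposable right `A`-modules. -/
def NoShortCycles (K A : Type) [Field K] [Ring A] [Algebra K A] : Prop :=
  ∀ (X Y : Type) [AddCommGroup X] [Module Aᵐᵒᵖ X] [Module K X]
    [IsScalarTower K Aᵐᵒᵖ X] [FiniteDimensional K X]
    [AddCommGroup Y] [Module Aᵐᵒᵖ Y] [Module K Y]
    [IsScalarTower K Aᵐᵒᵖ Y] [FiniteDimensional K Y],
    IsIndecomposableModule Aᵐᵒᵖ X → IsIndecomposableModule Aᵐᵒᵖ Y →
    ∀ (f : X →ₗ[Aᵐᵒᵖ] Y) (g : Y →ₗ[Aᵐᵒᵖ] X),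
      f ≠ 0 → ¬Function.Bijective f → g ≠ 0 → ¬Function.Bijective g → False

/-- The radical `rad M = J(A) • M` of a module. -/
def radSub (A : Type) [Ring A] (M : Type) [AddCommGroup M] [Module A M] :
    Submodule A M :=
  (⊥ : Ideal A).jacobson • (⊤ : Submodule A M)

/-- The socle of a module: the sum of all its simple submodules. -/
def socSub (A : Type) [Ring A] (M : Type) [AddCommGroup M] [Module A M] :
    Submodule A M :=
  sSup {S : Submodule A M | IsSimpleModule A S}

/-- Let `A` be a finite-dimensional algebra over `K` whose module
category has no short cycles, and let `P` be an indecomposable projective-injective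
finite-dimensional right `A`-module which is not simple.  Then no nonzero endomorphism
of `P` has image equal to `soc P`; equivalently `soc P` is not a quotient of `top P`,
so `soc P ≇ top P`. -/
theorem stmt_16 (K A : Type) [Field K] [Ring A] [Algebra K A] [FiniteDimensional K A]
    (hnsc : NoShortCycles K A)
    (P : Type) [AddCommGroup P] [Module Aᵐᵒᵖ P] [Module K P]
    [IsScalarTower K Aᵐᵒᵖ P] [FiniteDimensional K P]
    (hproj : Module.Projective Aᵐᵒᵖ P) (hinj : Module.Injective Aᵐᵒᵖ P)
    (hind : IsIndecomposableModule Aᵐᵒᵖ P) (hns : ¬IsSimpleModule Aᵐᵒᵖ P) :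
    (∀ φ : P →ₗ[Aᵐᵒᵖ] P, φ ≠ 0 → LinearMap.range φ ≠ socSub Aᵐᵒᵖ P) ∧
    ¬Nonempty (↥(socSub Aᵐᵒᵖ P) ≃ₗ[Aᵐᵒᵖ] (P ⧸ radSub Aᵐᵒᵖ P)) := by
  classical
  obtain ⟨hPt, hPc⟩ := hind
  -- every nonzero nonbijective endomorphism yields a contradiction
  have key : ∀ ψ : P →ₗ[Aᵐᵒᵖ] P, ψ ≠ 0 → ¬Function.Bijective ψ → False := fun ψ h1 h2 =>
    hnsc P P ⟨hPt, hPc⟩ ⟨hPt, hPc⟩ ψ ψ h1 h2 h1 h2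
  -- socle is not the whole module
  have hsoc_ne_top : socSub Aᵐᵒᵖ P ≠ ⊤ := by
    intro h
    have hss : IsSemisimpleModule Aᵐᵒᵖ P := IsSemisimpleModule.of_sSup_simples_eq_top h
    apply hns
    haveI : Nontrivial (Submodule Aᵐᵒᵖ P) := ⟨⟨⊥, ⊤, Ne.symm hPt⟩⟩
    refine { eq_bot_or_eq_top := fun N => ?_ }
    obtain ⟨N', hN'⟩ := exists_isCompl N
    rcases hPc N N' hN' with h | h
    · exact Or.inl h
    · right
      subst h
      simpa using hN'.sup_eq_top
  constructor
  · intro φ hφ hrange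
    apply key φ hφ
    intro hbij
    exact hsoc_ne_top (hrange ▸ (LinearMap.range_eq_top.mpr hbij.surjective))
  · rintro ⟨e⟩
    -- the radical is a proper submodule, by Nakayama
    haveI : IsArtinian Aᵐᵒᵖ P := isArtinian_of_tower K inferInstance
    have hsoc_ne_bot : socSub Aᵐᵒᵖ P ≠ ⊥ := by
      haveI : IsAtomic (Submodule Aᵐᵒᵖ P) :=
        isAtomic_of_orderBot_wellFounded_lt (IsWellFounded.wf)
      rcases IsAtomic.eq_bot_or_exists_atom_le (⊤ : Submodule Aᵐᵒᵖ P) with h | ⟨a, ha, -⟩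
      · exact absurd h hPt
      · intro h
        exact ha.1 (le_bot_iff.mp (h ▸ le_sSup (isSimpleModule_iff_isAtom.mpr ha)))
    have hrad_ne_top : radSub Aᵐᵒᵖ P ≠ ⊤ := by
      intro h
      haveI : Subsingleton (P ⧸ radSub Aᵐᵒᵖ P) :=
        (Submodule.Quotient.subsingleton_iff).mpr h
      haveI : Subsingleton (socSub Aᵐᵒᵖ P) := e.toEquiv.subsingleton
      exact hsoc_ne_bot (Submodule.eq_bot_of_subsingleton)
    set ψ : P →ₗ[Aᵐᵒᵖ] P :=
      (socSub Aᵐᵒᵖ P).subtype ∘ₗ e.symm.toLinearMap ∘ₗ (radSub Aᵐᵒᵖ P).mkQ with hψ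
    have hψ0 : ψ ≠ 0 := by
      obtain ⟨x, hx⟩ : ∃ x : P, x ∉ radSub Aᵐᵒᵖ P := by
        by_contra hc
        push_neg at hc
        exact hrad_ne_top (top_le_iff.mp fun y _ => hc y)
      intro h0
      have hx0 : (radSub Aᵐᵒᵖ P).mkQ x ≠ 0 := by
        simpa [Submodule.Quotient.mk_eq_zero] using hx
      have : ψ x = 0 := by rw [h0]; rfl
      rw [hψ] at this
      simp only [LinearMap.coe_comp, Function.comp_apply, Submodule.coe_subtype,
        LinearEquiv.coe_coe] at this
      have h2 : e.symm ((radSub Aᵐᵒᵖ P).mkQ x) = 0 := Subtype.ext (by simpa using this)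
      rw [map_eq_zero_iff _ e.symm.injective] at h2
      exact hx0 h2
    apply key ψ hψ0
    intro hbij
    apply hsoc_ne_top
    rw [eq_top_iff]
    intro y _
    obtain ⟨x, hx⟩ := hbij.surjective y
    have : ψ x ∈ socSub Aᵐᵒᵖ P := by
      rw [hψ]
      exact (e.symm ((radSub Aᵐᵒᵖ P).mkQ x)).2
    rwa [hx] at this
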